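/- arXiv:1510.03991 — 6 statements merged into one kernel-verified Lean document; each statement's English description precedes it below -/
import Mathlib

section
/- Let F be a Frobenius category. Given a commutative square with left edge an inflation i : A → B, right edge a deflation p : X → Y whose kernel is injective, top edge f : A → X and bottom edge g : B → Y (so p∘f = g∘i), there exists a lift h : B → X with h∘i = f and p∘h = g. -/
open CategoryTheory CategoryTheory.Limits

universe v u

variable (C : Type u) [Category.{v} C] [Preadditive C] [HasZeroObject C] [HasBinaryBiproducts C]

/-- A Quillen exact structure on an additive category: a class of conflations
(kernel-cokernel pairs) satisfying the axioms of an exact category. -/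
structure ExactStructure where
  /-- the class of conflations -/
  IsConflation : ∀ ⦃X Y Z : C⦄, (X ⟶ Y) → (Y ⟶ Z) → Prop
  comp_zero : ∀ {X Y Z : C} {i : X ⟶ Y} {d : Y ⟶ Z}, IsConflation i d → i ≫ d = 0
  isKernel : ∀ {X Y Z : C} {i : X ⟶ Y} {d : Y ⟶ Z} (h : IsConflation i d),
    Nonempty (IsLimit (KernelFork.ofι i (comp_zero h)))
  isCokernel : ∀ {X Y Z : C} {i : X ⟶ Y} {d : Y ⟶ Z} (h : IsConflation i d),
    Nonempty (IsColimit (CokernelCofork.ofπ d (comp_zero h)))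
  split_conflation : ∀ X Y : C, IsConflation (biprod.inl : X ⟶ X ⊞ Y) (biprod.snd : X ⊞ Y ⟶ Y)
  iso_closed : ∀ {X Y Z X' Y' Z' : C} {i : X ⟶ Y} {d : Y ⟶ Z}
    (eX : X ≅ X') (eY : Y ≅ Y') (eZ : Z ≅ Z') (i' : X' ⟶ Y') (d' : Y' ⟶ Z'),
    IsConflation i d → eX.hom ≫ i' = i ≫ eY.hom → eY.hom ≫ d' = d ≫ eZ.hom →
    IsConflation i' d'
  infl_comp : ∀ {X Y Z : C} {i : X ⟶ Y} {j : Y ⟶ Z},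
    (∃ (W : C) (d : Y ⟶ W), IsConflation i d) → (∃ (W : C) (d : Z ⟶ W), IsConflation j d) →
    ∃ (W : C) (d : Z ⟶ W), IsConflation (i ≫ j) d
  defl_comp : ∀ {X Y Z : C} {p : X ⟶ Y} {q : Y ⟶ Z},
    (∃ (W : C) (k : W ⟶ X), IsConflation k p) → (∃ (W : C) (k : W ⟶ Y), IsConflation k q) →
    ∃ (W : C) (k : W ⟶ X), IsConflation k (p ≫ q)
  infl_pushout : ∀ {X Y Z : C} {i : X ⟶ Y}, (∃ (W : C) (d : Y ⟶ W), IsConflation i d) →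
    ∀ (f : X ⟶ Z), ∃ (W : C) (i' : Z ⟶ W) (f' : Y ⟶ W),
      (∃ (V : C) (d : W ⟶ V), IsConflation i' d) ∧ IsPushout f i i' f'
  defl_pullback : ∀ {X Y Z : C} {p : X ⟶ Y}, (∃ (W : C) (k : W ⟶ X), IsConflation k p) →
    ∀ (f : Z ⟶ Y), ∃ (W : C) (p' : W ⟶ Z) (f' : W ⟶ X),
      (∃ (V : C) (k : V ⟶ W), IsConflation k p') ∧ IsPullback f' p' p f

namespace ExactStructure

variable {C}
variable (E : ExactStructure C)

/-- admissible monomorphisms -/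
def IsInflation {X Y : C} (i : X ⟶ Y) : Prop := ∃ (Z : C) (d : Y ⟶ Z), E.IsConflation i d

/-- admissible epimorphisms -/
def IsDeflation {X Y : C} (d : X ⟶ Y) : Prop := ∃ (W : C) (i : W ⟶ X), E.IsConflation i d

/-- injective objects relative to the exact structure -/
def Inj (I : C) : Prop :=
  ∀ ⦃X Y : C⦄ (i : X ⟶ Y), E.IsInflation i → ∀ f : X ⟶ I, ∃ g : Y ⟶ I, i ≫ g = f

/-- projective objects relative to the exact structure -/
def Proj (P : C) : Prop :=
  ∀ ⦃X Y : C⦄ (d : X ⟶ Y), E.IsDeflation d → ∀ f : P ⟶ Y, ∃ g : P ⟶ X, g ≫ d = f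

end ExactStructure

/-- A Frobenius structure: an exact structure with enough injectives and projectives,
where the projectives coincide with the injectives. -/
structure FrobeniusStructure extends ExactStructure C where
  enough_inj : ∀ X : C, ∃ (I : C) (i : X ⟶ I),
    toExactStructure.Inj I ∧ toExactStructure.IsInflation i
  enough_proj : ∀ X : C, ∃ (P : C) (p : P ⟶ X),
    toExactStructure.Proj P ∧ toExactStructure.IsDeflation p
  proj_iff_inj : ∀ X : C, toExactStructure.Proj X ↔ toExactStructure.Inj X

namespace FrobeniusStructure

variable {C}
variable (E : FrobeniusStructure C)

/-- morphisms factoring through a projective-injective object; these are the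
morphisms killed in the stable category. -/
def StablyTrivial {X Y : C} (f : X ⟶ Y) : Prop :=
  ∃ (I : C) (t : X ⟶ I) (s : I ⟶ Y), E.Inj I ∧ t ≫ s = f

/-- stable equivalences: morphisms becoming isomorphisms in the stable category F/I. -/
def IsStableEquiv {X Y : C} (f : X ⟶ Y) : Prop :=
  ∃ g : Y ⟶ X, E.StablyTrivial (𝟙 X - f ≫ g) ∧ E.StablyTrivial (𝟙 Y - g ≫ f)

end FrobeniusStructure
/-- Cofibrations lift against trivial fibrations (deflations with injective kernel). -/
theorem cofibration_lift_trivialFibration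
    (E : FrobeniusStructure C) {A B X Y W : C}
    (i : A ⟶ B) (hi : E.IsInflation i)
    (k : W ⟶ X) (p : X ⟶ Y) (hp : E.IsConflation k p) (hW : E.Inj W)
    (f : A ⟶ X) (g : B ⟶ Y) (sq : f ≫ p = i ≫ g) :
    ∃ h : B ⟶ X, i ≫ h = f ∧ h ≫ p = g := by
  -- pull the deflation `p` back along `g`
  obtain ⟨P, q, pr, ⟨V, k₂, hq⟩, pb⟩ := E.defl_pullback ⟨W, k, hp⟩ g
  -- the comparison map `a : A ⟶ P`
  let a : A ⟶ P := pb.lift f i sq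
  have ha1 : a ≫ pr = f := pb.lift_fst _ _ _
  have ha2 : a ≫ q = i := pb.lift_snd _ _ _
  -- the map `ψ : W ⟶ P` induced by `k` and `0`
  have hk : k ≫ p = 0 := E.comp_zero hp
  let ψ : W ⟶ P := pb.lift k 0 (by simp [hk])
  have hψ1 : ψ ≫ pr = k := pb.lift_fst _ _ _
  have hψ2 : ψ ≫ q = 0 := pb.lift_snd _ _ _
  obtain ⟨lim_p⟩ := E.isKernel hp
  obtain ⟨lim_q⟩ := E.isKernel hq
  obtain ⟨colim_q⟩ := E.isCokernel hq
  have hk2q : k₂ ≫ q = 0 := E.comp_zero hq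
  -- `χ : W ⟶ V` with `χ ≫ k₂ = ψ`
  obtain ⟨χ, hχ⟩ := KernelFork.IsLimit.lift' lim_q ψ hψ2
  dsimp at hχ
  change W ⟶ V at χ
  -- `φ : V ⟶ W` with `φ ≫ k = k₂ ≫ pr`
  obtain ⟨φ, hφ⟩ := KernelFork.IsLimit.lift' lim_p (k₂ ≫ pr)
    (by rw [Category.assoc, pb.w, ← Category.assoc, hk2q, zero_comp])
  dsimp at hφ
  change V ⟶ W at φ
  have hφψ : φ ≫ ψ = k₂ := by
    apply pb.hom_ext
    · rw [Category.assoc, hψ1, hφ]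
    · rw [Category.assoc, hψ2, comp_zero, hk2q]
  have hmono_k : ∀ {T : C} (u v : T ⟶ W), u ≫ k = v ≫ k → u = v := by
    intro T u v huv
    exact Fork.IsLimit.hom_ext lim_p (by simpa using huv)
  have hmono_k2 : ∀ {T : C} (u v : T ⟶ V), u ≫ k₂ = v ≫ k₂ → u = v := by
    intro T u v huv
    exact Fork.IsLimit.hom_ext lim_q (by simpa using huv)
  have hφχ : φ ≫ χ = 𝟙 V := by
    apply hmono_k2
    rw [Category.assoc, hχ, hφψ, Category.id_comp]
  have hχφ : χ ≫ φ = 𝟙 W := by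
    apply hmono_k
    rw [Category.assoc, hφ, ← Category.assoc, hχ, hψ1, Category.id_comp]
  -- `(ψ, q)` is a conflation
  have hψq : E.IsConflation ψ q :=
    E.toExactStructure.iso_closed ⟨φ, χ, hφχ, hχφ⟩ (Iso.refl P) (Iso.refl B) ψ q hq
      (by simp [hφψ]) (by simp)
  -- retraction of `ψ` since `W` is injective
  obtain ⟨r, hr⟩ := hW ψ ⟨B, q, hψq⟩ (𝟙 W)
  -- section `s₀` of `q`
  have hψr : ψ ≫ (𝟙 P - r ≫ ψ) = 0 := by
    rw [Preadditive.comp_sub, Category.comp_id, ← Category.assoc, hr, Category.id_comp, sub_self]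
  obtain ⟨s₀, hs₀⟩ := CokernelCofork.IsColimit.desc' colim_q (𝟙 P - r ≫ ψ)
    (by rw [← hφψ, Category.assoc, hψr, comp_zero])
  dsimp at hs₀
  change B ⟶ P at s₀
  have hepi_q : ∀ {T : C} (u v : B ⟶ T), q ≫ u = q ≫ v → u = v := by
    intro T u v huv
    exact Cofork.IsColimit.hom_ext colim_q (by simpa using huv)
  have hs₀q : s₀ ≫ q = 𝟙 B := by
    apply hepi_q
    rw [← Category.assoc, hs₀, Preadditive.sub_comp, Category.id_comp, Category.assoc, hψ2,
      comp_zero, sub_zero, Category.comp_id]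
  -- the defect `d := a - i ≫ s₀` factors through the kernel
  have hd : (a - i ≫ s₀) ≫ q = 0 := by
    rw [Preadditive.sub_comp, ha2, Category.assoc, hs₀q, Category.comp_id, sub_self]
  obtain ⟨e₂, he₂⟩ := KernelFork.IsLimit.lift' lim_q (a - i ≫ s₀) hd
  dsimp at he₂
  change A ⟶ V at e₂
  have he : (e₂ ≫ φ) ≫ ψ = a - i ≫ s₀ := by
    rw [Category.assoc, hφψ, he₂]
  -- extend `e₂ ≫ φ` along the inflation `i`
  obtain ⟨e', he'⟩ := hW i hi (e₂ ≫ φ)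
  refine ⟨(s₀ + e' ≫ ψ) ≫ pr, ?_, ?_⟩
  · rw [← Category.assoc, Preadditive.comp_add, ← Category.assoc, he', he,
      show i ≫ s₀ + (a - i ≫ s₀) = a from by abel, ha1]
  · rw [Category.assoc, pb.w, ← Category.assoc, Preadditive.add_comp, hs₀q, Category.assoc,
      hψ2, comp_zero, add_zero, Category.id_comp]
end

section
/- Let F be a Frobenius category. Given a commutative square with left edge an inflation i : A → B whose cokernel is injective, right edge a deflation p : X → Y, top edge f : A → X and bottom edge g : B → Y, there exists a lift h : B → X with h∘i = f and p∘h = g. -/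
open CategoryTheory CategoryTheory.Limits

universe v u

variable (C : Type u) [Category.{v} C] [Preadditive C] [HasZeroObject C] [HasBinaryBiproducts C]

/-- Trivial cofibrations (inflations with injective cokernel) lift against fibrations. -/
theorem trivialCofibration_lift_fibration
    (E : FrobeniusStructure C) {A B Z X Y : C}
    (i : A ⟶ B) (c : B ⟶ Z) (hi : E.IsConflation i c) (hZ : E.Inj Z)
    (p : X ⟶ Y) (hp : E.IsDeflation p)
    (f : A ⟶ X) (g : B ⟶ Y) (sq : f ≫ p = i ≫ g) :
    ∃ h : B ⟶ X, i ≫ h = f ∧ h ≫ p = g := by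
  obtain ⟨hK⟩ := E.isKernel hi
  have hic : i ≫ c = 0 := E.comp_zero hi
  have hZp : E.Proj Z := (E.proj_iff_inj Z).mpr hZ
  obtain ⟨s, hs⟩ := hZp c ⟨A, i, hi⟩ (𝟙 Z)
  obtain ⟨r, hr⟩ := KernelFork.IsLimit.lift' hK (𝟙 B - c ≫ s)
    (by simp [Preadditive.sub_comp, Category.assoc, hs])
  have hri : r ≫ i = 𝟙 B - c ≫ s := hr
  have hir : i ≫ r = 𝟙 A := by
    apply Fork.IsLimit.hom_ext hK
    simp only [Fork.ι_ofι, Category.assoc, hri, Preadditive.comp_sub, Category.comp_id,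
      Category.id_comp]
    rw [reassoc_of% hic]
    simp
  obtain ⟨t, ht⟩ := hZp p hp (s ≫ g)
  refine ⟨r ≫ f + c ≫ t, ?_, ?_⟩
  · rw [Preadditive.comp_add, reassoc_of% hir, reassoc_of% hic]
    simp
  · rw [Preadditive.add_comp, Category.assoc, Category.assoc, ht, sq, reassoc_of% hri]
    simp [Preadditive.sub_comp, sq]
end

section
/- In a Frobenius category F, every morphism f : X → Y factors as f = q ∘ j, where j is an inflation (a cofibration) and q is a deflation whose kernel is injective (a trivial fibration). -/
open CategoryTheory CategoryTheory.Limits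

universe v u

variable (C : Type u) [Category.{v} C] [Preadditive C] [HasZeroObject C] [HasBinaryBiproducts C]

section Aux

variable {C}
variable (E : ExactStructure C)

lemma ExactStructure.infl_comp_iso {X Y Y' : C} {i : X ⟶ Y} (hi : E.IsInflation i)
    (e : Y ≅ Y') : E.IsInflation (i ≫ e.hom) := by
  obtain ⟨Z, d, hd⟩ := hi
  exact ⟨Z, e.inv ≫ d,
    E.iso_closed (Iso.refl X) e (Iso.refl Z) (i ≫ e.hom) (e.inv ≫ d) hd (by simp) (by simp)⟩

lemma ExactStructure.conflation_inr_fst (A B : C) :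
    E.IsConflation (biprod.inr : A ⟶ B ⊞ A) (biprod.fst : B ⊞ A ⟶ B) :=
  E.iso_closed (Iso.refl A) (biprod.braiding A B) (Iso.refl B) _ _
    (E.split_conflation A B) (by apply biprod.hom_ext <;> simp) (by simp)

lemma ExactStructure.infl_inr (A B : C) : E.IsInflation (biprod.inr : A ⟶ B ⊞ A) :=
  ⟨B, biprod.fst, E.conflation_inr_fst A B⟩

lemma ExactStructure.infl_map_id {X I : C} {i : X ⟶ I} (hi : E.IsInflation i) (Y : C) :
    E.IsInflation (biprod.map (𝟙 Y) i : Y ⊞ X ⟶ Y ⊞ I) := by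
  obtain ⟨W, i', f', hi', hpo⟩ := E.infl_pushout hi (biprod.inr : X ⟶ Y ⊞ X)
  -- explicit pushout cocone on `Y ⊞ I`
  have hpo' : IsPushout (biprod.inr : X ⟶ Y ⊞ X) i
      (biprod.map (𝟙 Y) i) (biprod.inr : I ⟶ Y ⊞ I) := by
    refine IsPushout.of_isColimit (c := PushoutCocone.mk (biprod.map (𝟙 Y) i) (biprod.inr : I ⟶ Y ⊞ I) (by simp)) ?_
    refine PushoutCocone.IsColimit.mk _
      (fun s => biprod.desc (biprod.inl ≫ s.inl) s.inr) ?_ ?_ ?_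
    · intro s
      apply biprod.hom_ext' <;> simp [← s.condition]
    · intro s; simp
    · intro s m h1 h2
      apply biprod.hom_ext'
      · simpa using biprod.inl ≫= h1
      · simpa using h2
  have he : i' ≫ (hpo.isoIsPushout _ _ hpo').hom = biprod.map (𝟙 Y) i := by simp
  rw [← he]
  exact E.infl_comp_iso hi' (hpo.isoIsPushout _ _ hpo')

end Aux

/-- Every morphism factors as a cofibration followed by a trivial fibration. -/
theorem factor_cofibration_trivialFibration
    (E : FrobeniusStructure C) {X Y : C} (f : X ⟶ Y) :
    ∃ (Z : C) (j : X ⟶ Z) (q : Z ⟶ Y),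
      E.IsInflation j ∧
      (∃ (W : C) (k : W ⟶ Z), E.IsConflation k q ∧ E.Inj W) ∧
      j ≫ q = f := by
  obtain ⟨I, i, hInj, hi⟩ := E.enough_inj X
  -- the automorphism ψ of Y ⊞ X
  let a : Y ⊞ X ⟶ Y ⊞ X := biprod.snd ≫ f ≫ biprod.inl
  have ha : a ≫ a = 0 := by simp [a]
  let ψ : Y ⊞ X ≅ Y ⊞ X :=
    ⟨𝟙 _ + a, 𝟙 _ - a, by simp [Preadditive.comp_sub, Preadditive.add_comp, ha], by simp [Preadditive.comp_add, Preadditive.sub_comp, ha]⟩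
  have hdecomp : (biprod.inr ≫ ψ.hom) ≫ biprod.map (𝟙 Y) i = biprod.lift f i := by
    apply biprod.hom_ext <;> simp [ψ, a, Preadditive.add_comp, Preadditive.comp_add]
  refine ⟨Y ⊞ I, biprod.lift f i, biprod.fst, ?_, ⟨I, biprod.inr,
    E.conflation_inr_fst I Y, hInj⟩, by simp⟩
  rw [← hdecomp]
  exact E.infl_comp (E.infl_comp_iso (E.infl_inr X Y) ψ)
    (E.infl_map_id hi Y)
end

section
/- Let F be a Frobenius category, X an object, and Ω(X) ↣ P(X) ↠ X a conflation with P(X) projective-injective. Then X ⊕ P(X), with structure maps s = (1_X, 0) : X → X ⊕ P(X) and (p_0, p_1) : X ⊕ P(X) → X ⊕ X given by the matrix [[1_X, p_X],[1_X, 0]], is a path object for X: s is an inflation with injective cokernel, (p_0,p_1) is a deflation, and p_0 ∘ s = p_1 ∘ s = 1_X. -/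
open CategoryTheory CategoryTheory.Limits

universe v u

variable (C : Type u) [Category.{v} C] [Preadditive C] [HasZeroObject C] [HasBinaryBiproducts C]

/-- X ⊕ P(X) is a path object for X: the map (1,0) is a trivial cofibration,
the matrix [[1, p_X],[1, 0]] is a fibration, and both composites with the
section are the identity. -/
theorem pathObject_biprod
    (E : FrobeniusStructure C) {ΩX PX X : C}
    (ι : ΩX ⟶ PX) (pX : PX ⟶ X) (h : E.IsConflation ι pX)
    (hPX : E.Proj PX ∧ E.Inj PX) :
    (∃ (W : C) (d : X ⊞ PX ⟶ W),
        E.IsConflation (biprod.lift (𝟙 X) (0 : X ⟶ PX)) d ∧ E.Inj W) ∧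
    E.IsDeflation (biprod.lift (biprod.desc (𝟙 X) pX) (biprod.desc (𝟙 X) 0) :
        X ⊞ PX ⟶ X ⊞ X) ∧
    biprod.lift (𝟙 X) (0 : X ⟶ PX) ≫ biprod.desc (𝟙 X) pX = 𝟙 X ∧
    biprod.lift (𝟙 X) (0 : X ⟶ PX) ≫ biprod.desc (𝟙 X) (0 : PX ⟶ X) = 𝟙 X := by
  refine ⟨⟨PX, biprod.snd, ?_, hPX.2⟩, ?_, by simp, by simp⟩
  · have hEq : (biprod.lift (𝟙 X) (0 : X ⟶ PX)) = biprod.inl := by ext <;> simp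
    rw [hEq]
    exact E.split_conflation X PX
  · -- the matrix map is a deflation
    obtain ⟨W, p', f', ⟨V, k, hconf⟩, hpb⟩ :=
      E.defl_pullback ⟨ΩX, ι, h⟩ (biprod.snd : X ⊞ X ⟶ X)
    have comm : (biprod.snd : X ⊞ PX ⟶ PX) ≫ pX =
        biprod.map (𝟙 X) pX ≫ biprod.snd := by simp
    have hpb' : IsPullback (biprod.snd : X ⊞ PX ⟶ PX) (biprod.map (𝟙 X) pX) pX
        (biprod.snd : X ⊞ X ⟶ X) := by
      refine IsPullback.of_isLimit' ⟨comm⟩ ?_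
      refine PullbackCone.IsLimit.mk _
        (fun s => biprod.lift (s.snd ≫ biprod.fst) s.fst) (fun s => by simp)
        (fun s => ?_) (fun s m hm1 hm2 => ?_)
      · ext
        · simp
        · simpa using s.condition
      · ext
        · have := hm2 =≫ biprod.fst
          simpa using this
        · simpa using hm1
    obtain ⟨e, he⟩ : ∃ e : W ≅ X ⊞ PX, e.hom ≫ biprod.map (𝟙 X) pX = p' :=
      ⟨hpb.isoIsPullback _ _ hpb', hpb.isoIsPullback_hom_snd _ _ hpb'⟩
    have uIso : (X ⊞ X) ≅ (X ⊞ X) :=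
      { hom := biprod.lift (biprod.fst + biprod.snd) biprod.fst
        inv := biprod.lift biprod.snd (biprod.fst - biprod.snd)
        hom_inv_id := by ext <;> simp
        inv_hom_id := by ext <;> simp }
    refine ⟨V, k ≫ e.hom, E.iso_closed (Iso.refl V) e
      ⟨biprod.lift (biprod.fst + biprod.snd) biprod.fst,
        biprod.lift biprod.snd (biprod.fst - biprod.snd),
        by ext <;> simp, by ext <;> simp⟩ _ _ hconf (by simp) ?_⟩
    have hq : biprod.map (𝟙 X) pX ≫ biprod.lift (biprod.fst + biprod.snd) biprod.fst =
        biprod.lift (biprod.desc (𝟙 X) pX) (biprod.desc (𝟙 X) 0) := by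
      ext <;> simp
    dsimp only [Iso.refl_hom]
    rw [← he, Category.assoc, hq]
end

section
/- Let F be a Frobenius category and X, Y objects, with path object X ⊕ P(Y) for Y as above. Two morphisms f, g : X → Y are right homotopic with respect to this path object (i.e., there exists H : X → Y ⊕ P(Y) with p_0∘H = f and p_1∘H = g) if and only if f − g factors through a projective-injective object. -/
open CategoryTheory CategoryTheory.Limits

universe v u

variable (C : Type u) [Category.{v} C] [Preadditive C] [HasZeroObject C] [HasBinaryBiproducts C]

/-- Right homotopy with respect to the path object Y ⊕ P(Y) coincides with
stable equivalence of morphisms. -/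
theorem rightHomotopic_iff_stablyEquivalent
    (E : FrobeniusStructure C) {ΩY PY Y X : C}
    (ι : ΩY ⟶ PY) (pY : PY ⟶ Y) (h : E.IsConflation ι pY)
    (hPY : E.Proj PY ∧ E.Inj PY) (f g : X ⟶ Y) :
    (∃ H : X ⟶ Y ⊞ PY,
        H ≫ biprod.desc (𝟙 Y) pY = f ∧ H ≫ biprod.desc (𝟙 Y) (0 : PY ⟶ Y) = g) ↔
    E.StablyTrivial (f - g) := by
  constructor
  · rintro ⟨H, hf, hg⟩
    refine ⟨PY, H ≫ biprod.snd, pY, hPY.2, ?_⟩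
    have key : biprod.desc (𝟙 Y) pY - biprod.desc (𝟙 Y) (0 : PY ⟶ Y)
        = biprod.snd ≫ pY := by
      apply biprod.hom_ext' <;> simp
    calc (H ≫ biprod.snd) ≫ pY
        = H ≫ (biprod.desc (𝟙 Y) pY - biprod.desc (𝟙 Y) (0 : PY ⟶ Y)) := by
          rw [key, Category.assoc]
      _ = f - g := by rw [Preadditive.comp_sub, hf, hg]
  · rintro ⟨I, t, s, hI, hts⟩
    have hproj : E.Proj I := (E.proj_iff_inj I).mpr hI
    obtain ⟨u, hu⟩ := hproj pY ⟨ΩY, ι, h⟩ s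
    refine ⟨biprod.lift g (t ≫ u), ?_, ?_⟩
    · have : t ≫ u ≫ pY = f - g := by rw [hu, hts]
      simp [biprod.lift_desc, Category.assoc, this]
    · simp
end

section
/- In a Frobenius category F, if i : X → Y is an inflation admitting a stable inverse j : Y → X (so 1_X − j∘i factors through an injective object I via t : X → I and s : I → X), then the morphism (i, t)ᵀ : X → Y ⊕ I is a split inflation, and its cokernel J is an injective object. -/
open CategoryTheory CategoryTheory.Limits

universe v u

variable (C : Type u) [Category.{v} C] [Preadditive C] [HasZeroObject C] [HasBinaryBiproducts C]

section Aux

variable {C}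

/-- Injective objects are closed under biproducts. -/
lemma ExactStructure.inj_biprod (E : ExactStructure C) {I I' : C}
    (hI : E.Inj I) (hI' : E.Inj I') : E.Inj (I ⊞ I') := by
  intro A B a ha f
  obtain ⟨g1, hg1⟩ := hI a ha (f ≫ biprod.fst)
  obtain ⟨g2, hg2⟩ := hI' a ha (f ≫ biprod.snd)
  refine ⟨biprod.lift g1 g2, ?_⟩
  apply biprod.hom_ext <;> simp [hg1, hg2]

/-- Injective objects are closed under retracts. -/
lemma ExactStructure.inj_retract (E : ExactStructure C) {J I : C}
    (hI : E.Inj I) (u : J ⟶ I) (v : I ⟶ J) (huv : u ≫ v = 𝟙 J) : E.Inj J := by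
  intro A B a ha f
  obtain ⟨g, hg⟩ := hI a ha (f ≫ u)
  refine ⟨g ≫ v, ?_⟩
  rw [← Category.assoc, hg, Category.assoc, huv, Category.comp_id]

end Aux

/-- If an inflation i has a stable inverse j, with 1 - j∘i = s∘t through an
injective I, then (i,t)ᵀ : X → Y ⊕ I is a split inflation with injective cokernel. -/
theorem split_inflation_injective_cokernel
    (E : FrobeniusStructure C) {X Y I : C}
    (i : X ⟶ Y) (hi : E.IsInflation i) (j : Y ⟶ X)
    (hI : E.Inj I) (t : X ⟶ I) (s : I ⟶ X)
    (hts : 𝟙 X - i ≫ j = t ≫ s)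
    (hj : E.StablyTrivial (𝟙 Y - j ≫ i)) :
    (∃ r : Y ⊞ I ⟶ X, biprod.lift i t ≫ r = 𝟙 X) ∧
    (∃ (J : C) (d : Y ⊞ I ⟶ J), E.IsConflation (biprod.lift i t) d ∧ E.Inj J) := by
  classical
  -- the retraction
  have hr : biprod.lift i t ≫ biprod.desc j s = 𝟙 X := by
    simp [biprod.lift_desc, ← hts]
  refine ⟨⟨biprod.desc j s, hr⟩, ?_⟩
  -- extend t along the inflation i using injectivity of I
  obtain ⟨u, hu⟩ := hI i hi t
  -- the automorphism φ of Y ⊞ I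
  let φ : Y ⊞ I ⟶ Y ⊞ I := biprod.lift biprod.fst (biprod.fst ≫ u + biprod.snd)
  let ψ : Y ⊞ I ⟶ Y ⊞ I := biprod.lift biprod.fst (biprod.snd - biprod.fst ≫ u)
  have hφψ : φ ≫ ψ = 𝟙 _ := by
    apply biprod.hom_ext <;> simp [φ, ψ]
  have hψφ : ψ ≫ φ = 𝟙 _ := by
    apply biprod.hom_ext <;> simp [φ, ψ]
  have hinl : ExactStructure.IsInflation E.toExactStructure (biprod.inl : Y ⟶ Y ⊞ I) :=
    ⟨I, biprod.snd, E.split_conflation Y I⟩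
  obtain ⟨J, d₀, hd₀⟩ := E.infl_comp hi hinl
  have hiφ : (𝟙 X) ≫ biprod.lift i t = (i ≫ biprod.inl) ≫ φ := by
    apply biprod.hom_ext <;> simp [φ, hu]
  have hconf : E.IsConflation (biprod.lift i t) (ψ ≫ d₀) := by
    refine E.iso_closed (Iso.refl X) ⟨φ, ψ, hφψ, hψφ⟩ (Iso.refl J) _ _ hd₀ ?_ ?_
    · exact hiφ
    · show φ ≫ ψ ≫ d₀ = d₀ ≫ 𝟙 J
      rw [← Category.assoc, hφψ, Category.id_comp, Category.comp_id]
  set d : Y ⊞ I ⟶ J := ψ ≫ d₀ with hd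
  refine ⟨J, d, hconf, ?_⟩
  -- now show J is injective
  obtain ⟨hcolim⟩ := E.isCokernel hconf
  have hepi : ∀ {W : C} (a b : J ⟶ W), d ≫ a = d ≫ b → a = b := by
    intro W a b hab
    exact Cofork.IsColimit.hom_ext hcolim (by simpa using hab)
  set r : Y ⊞ I ⟶ X := biprod.desc j s with hrdef
  have hq : biprod.lift i t ≫ (𝟙 (Y ⊞ I) - r ≫ biprod.lift i t) = 0 := by
    simp only [Preadditive.comp_sub, Category.comp_id, ← Category.assoc, hr,
      Category.id_comp, sub_self]
  obtain ⟨σ, hσ⟩ := CokernelCofork.IsColimit.desc' hcolim _ hq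
  simp only [Cofork.π_ofπ] at hσ
  have hld : biprod.lift i t ≫ d = 0 := E.comp_zero hconf
  have hσd : σ ≫ d = 𝟙 J := by
    apply hepi
    rw [← Category.assoc, hσ]
    simp [Preadditive.sub_comp, Category.assoc, hld]
  -- the key computation: 𝟙 J factors through an injective
  obtain ⟨I', t', s', hI', hts'⟩ := hj
  -- i ≫ inl ≫ d = - t ≫ inr ≫ d
  have hid : i ≫ (biprod.inl ≫ d) = -(t ≫ (biprod.inr ≫ d)) := by
    have : biprod.lift i t = i ≫ biprod.inl + t ≫ biprod.inr := by
      apply biprod.hom_ext <;> simp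
    have h0 : (i ≫ biprod.inl + t ≫ biprod.inr) ≫ d = 0 := by rw [← this]; exact hld
    rw [Preadditive.add_comp, Category.assoc, Category.assoc] at h0
    linear_combination (norm := abel) h0
  have key : (biprod.lift (σ ≫ biprod.snd - σ ≫ biprod.fst ≫ j ≫ t)
      (σ ≫ biprod.fst ≫ t') : J ⟶ I ⊞ I') ≫
      (biprod.desc (biprod.inr ≫ d) (s' ≫ biprod.inl ≫ d)) = 𝟙 J := by
    have htotal : σ ≫ d = σ ≫ biprod.fst ≫ biprod.inl ≫ d
        + σ ≫ biprod.snd ≫ biprod.inr ≫ d := by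
      conv_rhs => rw [← Category.assoc σ biprod.fst, ← Category.assoc σ biprod.snd,
        ← Category.assoc (σ ≫ biprod.fst) biprod.inl d,
        ← Category.assoc (σ ≫ biprod.snd) biprod.inr d,
        ← Preadditive.add_comp, Category.assoc σ biprod.fst, Category.assoc σ biprod.snd,
        ← Preadditive.comp_add, biprod.total, Category.comp_id]
    have hone : (𝟙 Y : Y ⟶ Y) = j ≫ i + t' ≫ s' := by rw [hts']; abel
    have hY : (biprod.inl : Y ⟶ Y ⊞ I) ≫ d =
        j ≫ i ≫ biprod.inl ≫ d + t' ≫ s' ≫ biprod.inl ≫ d := by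
      have h : (𝟙 Y) ≫ (biprod.inl : Y ⟶ Y ⊞ I) ≫ d
          = j ≫ i ≫ biprod.inl ≫ d + t' ≫ s' ≫ biprod.inl ≫ d := by
        rw [hone]; simp [Preadditive.add_comp, Category.assoc]
      rwa [Category.id_comp] at h
    rw [biprod.lift_desc, ← hσd, htotal]
    conv_rhs => rw [hY]
    simp only [Preadditive.comp_add, Preadditive.add_comp, Preadditive.sub_comp,
      Preadditive.comp_sub, Category.assoc, hid]
    simp only [Preadditive.comp_neg]
    abel
  exact E.toExactStructure.inj_retract (E.toExactStructure.inj_biprod hI hI') _ _ key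
end
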